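/- arXiv:1607.06862 — 3 statements merged into one kernel-verified Lean document; each statement's English description precedes it below -/
import Mathlib

section
/- Let H be a Hilbert space, Y, Z reflexive Banach spaces, S : H → Y and T : H → Z bounded linear operators satisfying the orthogonality conditions S ∘ T† = 0 and T ∘ S† = 0. Suppose there is a Hilbert space H̃ with compact embedding j : H → H̃ and constant C > 0 with ‖h‖_H ≤ C(‖Sh‖_Y + ‖Th‖_Z + ‖j(h)‖_{H̃}) for all h ∈ H. If uₙ ⇀ ū and vₙ ⇀ v̄ weakly in H, {Suₙ} is pre-compact in Y, and {Tvₙ} is pre-compact in Z, then ⟨uₙ, vₙ⟩_H → ⟨ū, v̄⟩_H. -/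
open Filter
open scoped RealInnerProductSpace Topology

section AuxLemmas

variable {H : Type*} [NormedAddCommGroup H] [InnerProductSpace ℝ H]

/-- A weakly convergent sequence in a Hilbert space is bounded. -/
lemma aux_bdd [CompleteSpace H] (u : ℕ → H) (ub : H)
    (hu : ∀ w : H, Tendsto (fun n => ⟪u n, w⟫) atTop (𝓝 ⟪ub, w⟫)) :
    ∃ M : ℝ, ∀ n, ‖u n‖ ≤ M := by
  have hpt : ∀ x : H, ∃ c : ℝ,
      ∀ n : ℕ, ‖(InnerProductSpace.toDual ℝ H (u n) : H →L[ℝ] ℝ) x‖ ≤ c := by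
    intro x
    obtain ⟨c, hc⟩ := ((hu x).norm).bddAbove_range
    refine ⟨c, fun n => ?_⟩
    simpa [InnerProductSpace.toDual_apply_apply] using hc (Set.mem_range_self n)
  obtain ⟨M, hM⟩ := banach_steinhaus hpt
  refine ⟨M, fun n => ?_⟩
  have h1 := hM n
  have h2 : ‖(InnerProductSpace.toDual ℝ H) (u n)‖ = ‖u n‖ :=
    (InnerProductSpace.toDual ℝ H).norm_map (u n)
  rwa [h2] at h1

/-- Strong convergence times (bounded) weak convergence of inner products. -/
lemma aux_inner (a w : ℕ → H) (ab wb : H) (M : ℝ)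
    (ha : Tendsto a atTop (𝓝 ab))
    (hw : ∀ x : H, Tendsto (fun n => ⟪w n, x⟫) atTop (𝓝 ⟪wb, x⟫))
    (hM : ∀ n, ‖w n‖ ≤ M) :
    Tendsto (fun n => ⟪a n, w n⟫) atTop (𝓝 ⟪ab, wb⟫) := by
  have key : ∀ n, ⟪a n, w n⟫ = ⟪a n - ab, w n⟫ + ⟪w n, ab⟫ := by
    intro n
    rw [inner_sub_left, real_inner_comm (w n) ab]
    ring
  have h1 : Tendsto (fun n => ⟪a n - ab, w n⟫) atTop (𝓝 0) := by
    apply squeeze_zero_norm (a := fun n => ‖a n - ab‖ * M)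
    · intro n
      calc ‖⟪a n - ab, w n⟫‖ ≤ ‖a n - ab‖ * ‖w n‖ := norm_inner_le_norm _ _
        _ ≤ ‖a n - ab‖ * M :=
          mul_le_mul_of_nonneg_left (hM n) (norm_nonneg _)
    · have h2 : Tendsto (fun n => a n - ab) atTop (𝓝 0) := by
        simpa using ha.sub (tendsto_const_nhds (x := ab))
      simpa using h2.norm.mul_const M
  have h2 : Tendsto (fun n => ⟪w n, ab⟫) atTop (𝓝 ⟪wb, ab⟫) := hw ab
  have h3 := h1.add h2
  rw [zero_add] at h3
  rw [real_inner_comm wb ab]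
  exact h3.congr (fun n => (key n).symm)

/-- If `F (w n)` stays in a compact set and `w n ⇀ wb` weakly, then `F (w n) → F wb` in norm. -/
lemma aux_strong {Y : Type*} [NormedAddCommGroup Y] [NormedSpace ℝ Y] [CompleteSpace H]
    (F : H →L[ℝ] Y) (w : ℕ → H) (wb : H)
    (hw : ∀ x : H, Tendsto (fun n => ⟪w n, x⟫) atTop (𝓝 ⟪wb, x⟫))
    (K : Set Y) (hK : IsCompact K) (hmem : ∀ n, F (w n) ∈ K) :
    Tendsto (fun n => F (w n)) atTop (𝓝 (F wb)) := by
  have hweak : ∀ φ : Y →L[ℝ] ℝ,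
      Tendsto (fun n => φ (F (w n))) atTop (𝓝 (φ (F wb))) := by
    intro φ
    have key : ∀ x : H, φ (F x) = ⟪x, (InnerProductSpace.toDual ℝ H).symm (φ.comp F)⟫ := by
      intro x
      rw [real_inner_comm, InnerProductSpace.toDual_symm_apply]
      rfl
    simp only [key]
    exact hw _
  refine tendsto_of_subseq_tendsto fun ns hns => ?_
  obtain ⟨y, hyK, ms, hms, hlim⟩ :=
    hK.tendsto_subseq (x := fun n => F (w (ns n))) (fun n => hmem (ns n))
  refine ⟨ms, ?_⟩
  have hy : y = F wb := by
    have hφ : ∀ φ : Y →L[ℝ] ℝ, φ y = φ (F wb) := by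
      intro φ
      have hc1 : Tendsto (fun k => φ (F (w (ns (ms k))))) atTop (𝓝 (φ y)) :=
        (φ.continuous.tendsto y).comp hlim
      have hc2 : Tendsto (fun k => φ (F (w (ns (ms k))))) atTop (𝓝 (φ (F wb))) :=
        (hweak φ).comp (hns.comp hms.tendsto_atTop)
      exact tendsto_nhds_unique hc1 hc2
    have hz : ∀ φ : StrongDual ℝ Y, φ (y - F wb) = 0 := by
      intro φ
      rw [map_sub, hφ φ, sub_self]
    exact sub_eq_zero.mp (NormedSpace.eq_zero_of_forall_dual_eq_zero ℝ hz)
  rw [← hy]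
  exact hlim

end AuxLemmas

/-- (General compensated compactness theorem on Banach spaces.)
Let `H` be a Hilbert space, `Y`, `Z` reflexive Banach spaces, and `S : H → Y`, `T : H → Z`
bounded linear operators with `S ∘ T† = 0` and `T ∘ S† = 0` (adjoints via the Riesz
identification `H ≅ H*`).  Assume there are a Hilbert space `H̃`, a compact embedding
`j : H → H̃`, and `C > 0` with `‖h‖_H ≤ C (‖S h‖ + ‖T h‖ + ‖j h‖)` for all `h`.
If `uₙ ⇀ ū`, `vₙ ⇀ v̄` weakly in `H`, `{S uₙ}` is pre-compact in `Y` and `{T vₙ}` is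
pre-compact in `Z`, then `⟨uₙ, vₙ⟩_H → ⟨ū, v̄⟩_H`. -/
theorem stmt_7
    {H Y Z Ht : Type*}
    [NormedAddCommGroup H] [InnerProductSpace ℝ H] [CompleteSpace H]
    [NormedAddCommGroup Y] [NormedSpace ℝ Y] [CompleteSpace Y]
    [NormedAddCommGroup Z] [NormedSpace ℝ Z] [CompleteSpace Z]
    [NormedAddCommGroup Ht] [InnerProductSpace ℝ Ht] [CompleteSpace Ht]
    (hYrefl : Function.Bijective (NormedSpace.inclusionInDoubleDual ℝ Y))
    (hZrefl : Function.Bijective (NormedSpace.inclusionInDoubleDual ℝ Z))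
    (S : H →L[ℝ] Y) (T : H →L[ℝ] Z)
    -- (Op 1) orthogonality: S ∘ T† = 0 and T ∘ S† = 0
    (horth1 : ∀ b : Z →L[ℝ] ℝ, S ((InnerProductSpace.toDual ℝ H).symm (b.comp T)) = 0)
    (horth2 : ∀ a : Y →L[ℝ] ℝ, T ((InnerProductSpace.toDual ℝ H).symm (a.comp S)) = 0)
    -- (Op 2) the coercive estimate via a compact embedding j : H → H̃
    (j : H →L[ℝ] Ht) (hjinj : Function.Injective j) (hjcpt : IsCompactOperator j)
    (C : ℝ) (hC : 0 < C)
    (hest : ∀ h : H, ‖h‖ ≤ C * (‖S h‖ + ‖T h‖ + ‖j h‖))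
    -- (Seq 1) weak convergence of the two sequences
    (u v : ℕ → H) (ub vb : H)
    (hu : ∀ w : H, Tendsto (fun n => ⟪u n, w⟫) atTop (𝓝 ⟪ub, w⟫))
    (hv : ∀ w : H, Tendsto (fun n => ⟪v n, w⟫) atTop (𝓝 ⟪vb, w⟫))
    -- (Seq 2) pre-compactness of {S uₙ} and {T vₙ}
    (KY : Set Y) (hKY : IsCompact KY) (hSu : ∀ n, S (u n) ∈ KY)
    (KZ : Set Z) (hKZ : IsCompact KZ) (hTv : ∀ n, T (v n) ∈ KZ) :
    Tendsto (fun n => ⟪u n, v n⟫) atTop (𝓝 ⟪ub, vb⟫) := by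
  classical
  haveI : CompleteSpace (LinearMap.ker (S : H →ₗ[ℝ] Y)) :=
    (ContinuousLinearMap.isClosed_ker S).completeSpace_coe
  haveI : CompleteSpace (LinearMap.ker (T : H →ₗ[ℝ] Z)) :=
    (ContinuousLinearMap.isClosed_ker T).completeSpace_coe
  set PA : H → H := fun h => (Submodule.orthogonalProjectionOnto (LinearMap.ker (S : H →ₗ[ℝ] Y)) h : H) with hPA_def
  set PB : H → H := fun h => (Submodule.orthogonalProjectionOnto (LinearMap.ker (T : H →ₗ[ℝ] Z)) h : H) with hPB_def
  -- basic facts about the projections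
  have hPA_mem : ∀ h : H, S (PA h) = 0 := by
    intro h
    exact LinearMap.mem_ker.mp (SetLike.coe_mem (Submodule.orthogonalProjectionOnto (LinearMap.ker (S : H →ₗ[ℝ] Y)) h))
  have hPB_mem : ∀ h : H, T (PB h) = 0 := by
    intro h
    exact LinearMap.mem_ker.mp (SetLike.coe_mem (Submodule.orthogonalProjectionOnto (LinearMap.ker (T : H →ₗ[ℝ] Z)) h))
  have hPA_perp : ∀ h : H, h - PA h ∈ (LinearMap.ker (S : H →ₗ[ℝ] Y))ᗮ := fun h =>
    Submodule.sub_starProjection_mem_orthogonal h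
  have hPB_perp : ∀ h : H, h - PB h ∈ (LinearMap.ker (T : H →ₗ[ℝ] Z))ᗮ := fun h =>
    Submodule.sub_starProjection_mem_orthogonal h
  have hPA_adj : ∀ x y : H, ⟪PA x, y⟫ = ⟪x, PA y⟫ := fun x y =>
    Submodule.inner_starProjection_left_eq_right (LinearMap.ker (S : H →ₗ[ℝ] Y)) x y
  have hPB_adj : ∀ x y : H, ⟪PB x, y⟫ = ⟪x, PB y⟫ := fun x y =>
    Submodule.inner_starProjection_left_eq_right (LinearMap.ker (T : H →ₗ[ℝ] Z)) x y
  have hPA_norm : ∀ h : H, ‖PA h‖ ≤ ‖h‖ := by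
    intro h
    have h1 := (Submodule.orthogonalProjectionOnto (LinearMap.ker (S : H →ₗ[ℝ] Y))).le_opNorm h
    have h2 := Submodule.orthogonalProjectionOnto_norm_le (LinearMap.ker (S : H →ₗ[ℝ] Y))
    have h3 : ‖PA h‖ = ‖Submodule.orthogonalProjectionOnto (LinearMap.ker (S : H →ₗ[ℝ] Y)) h‖ := rfl
    rw [h3]
    nlinarith [norm_nonneg h, norm_nonneg (Submodule.orthogonalProjectionOnto (LinearMap.ker (S : H →ₗ[ℝ] Y)) h)]
  have hPB_norm : ∀ h : H, ‖PB h‖ ≤ ‖h‖ := by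
    intro h
    have h1 := (Submodule.orthogonalProjectionOnto (LinearMap.ker (T : H →ₗ[ℝ] Z))).le_opNorm h
    have h2 := Submodule.orthogonalProjectionOnto_norm_le (LinearMap.ker (T : H →ₗ[ℝ] Z))
    have h3 : ‖PB h‖ = ‖Submodule.orthogonalProjectionOnto (LinearMap.ker (T : H →ₗ[ℝ] Z)) h‖ := rfl
    rw [h3]
    nlinarith [norm_nonneg h, norm_nonneg (Submodule.orthogonalProjectionOnto (LinearMap.ker (T : H →ₗ[ℝ] Z)) h)]
  -- orthogonality: `(ker S)ᗮ ⊆ ker T` and `(ker T)ᗮ ⊆ ker S`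
  have hAperp : ∀ h : H, h ∈ (LinearMap.ker (S : H →ₗ[ℝ] Y))ᗮ → T h = 0 := by
    intro h hh
    apply NormedSpace.eq_zero_of_forall_dual_eq_zero ℝ
    intro φ
    have hg : (InnerProductSpace.toDual ℝ H).symm (φ.comp T) ∈ LinearMap.ker (S : H →ₗ[ℝ] Y) :=
      LinearMap.mem_ker.mpr (horth1 φ)
    have h0 : ⟪(InnerProductSpace.toDual ℝ H).symm (φ.comp T), h⟫ = 0 :=
      (Submodule.mem_orthogonal _ h).mp hh _ hg
    rw [InnerProductSpace.toDual_symm_apply] at h0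
    exact h0
  have hBperp : ∀ h : H, h ∈ (LinearMap.ker (T : H →ₗ[ℝ] Z))ᗮ → S h = 0 := by
    intro h hh
    apply NormedSpace.eq_zero_of_forall_dual_eq_zero ℝ
    intro φ
    have hg : (InnerProductSpace.toDual ℝ H).symm (φ.comp S) ∈ LinearMap.ker (T : H →ₗ[ℝ] Z) :=
      LinearMap.mem_ker.mpr (horth2 φ)
    have h0 : ⟪(InnerProductSpace.toDual ℝ H).symm (φ.comp S), h⟫ = 0 :=
      (Submodule.mem_orthogonal _ h).mp hh _ hg
    rw [InnerProductSpace.toDual_symm_apply] at h0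
    exact h0
  -- consequences
  have hSPB : ∀ x : H, S (PB x) = S x := by
    intro x
    have h1 : S (x - PB x) = 0 := hBperp _ (hPB_perp x)
    rw [map_sub] at h1
    have := sub_eq_zero.mp h1
    exact this.symm
  have hTPA : ∀ x : H, T (PA x) = T x := by
    intro x
    have h1 : T (x - PA x) = 0 := hAperp _ (hPA_perp x)
    rw [map_sub] at h1
    have := sub_eq_zero.mp h1
    exact this.symm
  -- bounds
  obtain ⟨Mu, hMu⟩ := aux_bdd u ub hu
  obtain ⟨Mv, hMv⟩ := aux_bdd v vb hv
  -- the key coercivity consequence: weakly null sequences killed by S and T go to 0 in norm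
  have key : ∀ (w : ℕ → H) (M : ℝ), (∀ n, ‖w n‖ ≤ M) →
      (∀ x : H, Tendsto (fun n => ⟪w n, x⟫) atTop (𝓝 (0 : ℝ))) →
      Tendsto (fun n => S (w n)) atTop (𝓝 0) →
      Tendsto (fun n => T (w n)) atTop (𝓝 0) →
      Tendsto w atTop (𝓝 0) := by
    intro w M hbound hweak hS0 hT0
    obtain ⟨K, hKc, hKsub⟩ :=
      IsCompactOperator.image_closedBall_subset_compact (𝕜₁ := ℝ)
        (f := (j : H →ₗ[ℝ] Ht)) hjcpt M
    have hj0 : Tendsto (fun n => j (w n)) atTop (𝓝 (j 0)) := by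
      apply aux_strong j w 0 (fun x => by simpa using hweak x) K hKc
      intro n
      exact hKsub (Set.mem_image_of_mem _ (mem_closedBall_zero_iff.mpr (hbound n)))
    rw [map_zero] at hj0
    rw [tendsto_zero_iff_norm_tendsto_zero]
    apply squeeze_zero (fun n => norm_nonneg _) (fun n => hest (w n))
    have hlim : Tendsto (fun n => C * ((‖S (w n)‖ + ‖T (w n)‖) + ‖j (w n)‖)) atTop
        (𝓝 (C * ((‖(0 : Y)‖ + ‖(0 : Z)‖) + ‖(0 : Ht)‖))) :=
      tendsto_const_nhds.mul ((hS0.norm.add hT0.norm).add hj0.norm)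
    simpa using hlim
  -- strong convergence of S uₙ and T vₙ
  have hSconv : Tendsto (fun n => S (u n)) atTop (𝓝 (S ub)) :=
    aux_strong S u ub hu KY hKY hSu
  have hTconv : Tendsto (fun n => T (v n)) atTop (𝓝 (T vb)) :=
    aux_strong T v vb hv KZ hKZ hTv
  -- weak convergence of the pieces
  have e1 : ∀ h x : H, ⟪h - PA h, x⟫ = ⟪h, x - PA x⟫ := by
    intro h x
    rw [inner_sub_left, inner_sub_right, hPA_adj h x]
  have e2 : ∀ h x : H, ⟪h - PB h, x⟫ = ⟪h, x - PB x⟫ := by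
    intro h x
    rw [inner_sub_left, inner_sub_right, hPB_adj h x]
  have e3 : ∀ h x : H, ⟪PB (PA h), x⟫ = ⟪h, PA (PB x)⟫ := by
    intro h x
    rw [hPB_adj, hPA_adj]
  have e4 : ∀ h x : H, ⟪PA (PB h), x⟫ = ⟪h, PB (PA x)⟫ := by
    intro h x
    rw [hPA_adj, hPB_adj]
  have haw : ∀ x : H, Tendsto (fun n => ⟪u n - PA (u n), x⟫) atTop (𝓝 ⟪ub - PA ub, x⟫) := by
    intro x
    simp only [e1]
    exact hu _
  have hbw : ∀ x : H, Tendsto (fun n => ⟪v n - PB (v n), x⟫) atTop (𝓝 ⟪vb - PB vb, x⟫) := by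
    intro x
    simp only [e2]
    exact hv _
  have hrw : ∀ x : H, Tendsto (fun n => ⟪PB (PA (u n)), x⟫) atTop (𝓝 ⟪PB (PA ub), x⟫) := by
    intro x
    simp only [e3]
    exact hu _
  have hsw : ∀ x : H, Tendsto (fun n => ⟪PA (PB (v n)), x⟫) atTop (𝓝 ⟪PA (PB vb), x⟫) := by
    intro x
    simp only [e4]
    exact hv _
  have hPAuw : ∀ x : H, Tendsto (fun n => ⟪PA (u n), x⟫) atTop (𝓝 ⟪PA ub, x⟫) := by
    intro x
    simp only [hPA_adj]
    exact hu _
  -- strong convergence of the three pieces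
  have hstrongA : Tendsto (fun n => u n - PA (u n)) atTop (𝓝 (ub - PA ub)) := by
    rw [← tendsto_sub_nhds_zero_iff]
    apply key _ (Mu + Mu + ‖ub - PA ub‖)
    · intro n
      calc ‖u n - PA (u n) - (ub - PA ub)‖
          ≤ ‖u n - PA (u n)‖ + ‖ub - PA ub‖ := norm_sub_le _ _
        _ ≤ (‖u n‖ + ‖PA (u n)‖) + ‖ub - PA ub‖ := by
            have := norm_sub_le (u n) (PA (u n)); linarith
        _ ≤ Mu + Mu + ‖ub - PA ub‖ := by
            have h1 := hPA_norm (u n); have h2 := hMu n; linarith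
    · intro x
      simpa [inner_sub_left] using (haw x).sub_const ⟪ub - PA ub, x⟫
    · have heq : ∀ n, S (u n - PA (u n) - (ub - PA ub)) = S (u n) - S ub := by
        intro n
        rw [map_sub, map_sub, map_sub, hPA_mem, hPA_mem]
        abel
      have h0 : Tendsto (fun n => S (u n) - S ub) atTop (𝓝 0) :=
        tendsto_sub_nhds_zero_iff.mpr hSconv
      exact h0.congr (fun n => (heq n).symm)
    · have heq : ∀ n, T (u n - PA (u n) - (ub - PA ub)) = 0 := by
        intro n
        rw [map_sub, hAperp _ (hPA_perp (u n)), hAperp _ (hPA_perp ub), sub_self]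
      have h0 : Tendsto (fun _ : ℕ => (0 : Z)) atTop (𝓝 0) := tendsto_const_nhds
      exact h0.congr (fun n => (heq n).symm)
  have hstrongB : Tendsto (fun n => v n - PB (v n)) atTop (𝓝 (vb - PB vb)) := by
    rw [← tendsto_sub_nhds_zero_iff]
    apply key _ (Mv + Mv + ‖vb - PB vb‖)
    · intro n
      calc ‖v n - PB (v n) - (vb - PB vb)‖
          ≤ ‖v n - PB (v n)‖ + ‖vb - PB vb‖ := norm_sub_le _ _
        _ ≤ (‖v n‖ + ‖PB (v n)‖) + ‖vb - PB vb‖ := by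
            have := norm_sub_le (v n) (PB (v n)); linarith
        _ ≤ Mv + Mv + ‖vb - PB vb‖ := by
            have h1 := hPB_norm (v n); have h2 := hMv n; linarith
    · intro x
      simpa [inner_sub_left] using (hbw x).sub_const ⟪vb - PB vb, x⟫
    · have heq : ∀ n, S (v n - PB (v n) - (vb - PB vb)) = 0 := by
        intro n
        rw [map_sub, hBperp _ (hPB_perp (v n)), hBperp _ (hPB_perp vb), sub_self]
      have h0 : Tendsto (fun _ : ℕ => (0 : Y)) atTop (𝓝 0) := tendsto_const_nhds
      exact h0.congr (fun n => (heq n).symm)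
    · have heq : ∀ n, T (v n - PB (v n) - (vb - PB vb)) = T (v n) - T vb := by
        intro n
        rw [map_sub, map_sub, map_sub, hPB_mem, hPB_mem]
        abel
      have h0 : Tendsto (fun n => T (v n) - T vb) atTop (𝓝 0) :=
        tendsto_sub_nhds_zero_iff.mpr hTconv
      exact h0.congr (fun n => (heq n).symm)
  have hSr : ∀ x : H, S (PB (PA x)) = 0 := by
    intro x
    rw [hSPB, hPA_mem]
  have hTr : ∀ x : H, T (PB (PA x)) = 0 := fun x => hPB_mem _
  have hSs : ∀ x : H, S (PA (PB x)) = 0 := fun x => hPA_mem _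
  have hTs : ∀ x : H, T (PA (PB x)) = 0 := by
    intro x
    rw [hTPA, hPB_mem]
  have hstrongR : Tendsto (fun n => PB (PA (u n))) atTop (𝓝 (PB (PA ub))) := by
    rw [← tendsto_sub_nhds_zero_iff]
    apply key _ (Mu + ‖PB (PA ub)‖)
    · intro n
      calc ‖PB (PA (u n)) - PB (PA ub)‖
          ≤ ‖PB (PA (u n))‖ + ‖PB (PA ub)‖ := norm_sub_le _ _
        _ ≤ Mu + ‖PB (PA ub)‖ := by
            have h1 := hPB_norm (PA (u n))
            have h2 := hPA_norm (u n)
            have h3 := hMu n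
            linarith
    · intro x
      simpa [inner_sub_left] using (hrw x).sub_const ⟪PB (PA ub), x⟫
    · have heq : ∀ n, S (PB (PA (u n)) - PB (PA ub)) = 0 := by
        intro n
        rw [map_sub, hSr, hSr, sub_self]
      have h0 : Tendsto (fun _ : ℕ => (0 : Y)) atTop (𝓝 0) := tendsto_const_nhds
      exact h0.congr (fun n => (heq n).symm)
    · have heq : ∀ n, T (PB (PA (u n)) - PB (PA ub)) = 0 := by
        intro n
        rw [map_sub, hTr, hTr, sub_self]
      have h0 : Tendsto (fun _ : ℕ => (0 : Z)) atTop (𝓝 0) := tendsto_const_nhds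
      exact h0.congr (fun n => (heq n).symm)
  -- the algebraic identity
  have ident : ∀ h g : H, ⟪h, g⟫ =
      ⟪h - PA h, g⟫ + ⟪PA h, g - PB g⟫ + ⟪PB (PA h), PA (PB g)⟫ := by
    intro h g
    have z1 : ⟪PA h - PB (PA h), PB g⟫ = 0 := by
      apply Submodule.inner_left_of_mem_orthogonal (K := LinearMap.ker (T : H →ₗ[ℝ] Z))
      · exact LinearMap.mem_ker.mpr (hPB_mem g)
      · exact hPB_perp (PA h)
    have z2 : ⟪PB (PA h), PB g - PA (PB g)⟫ = 0 := by
      apply Submodule.inner_right_of_mem_orthogonal (K := LinearMap.ker (S : H →ₗ[ℝ] Y))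
      · exact LinearMap.mem_ker.mpr (hSr h)
      · exact hPA_perp (PB g)
    have exp1 : ⟪h, g⟫ = ⟪h - PA h, g⟫ + ⟪PA h, g⟫ := by
      rw [inner_sub_left]; ring
    have exp2 : ⟪PA h, g⟫ = ⟪PA h, g - PB g⟫ + ⟪PA h, PB g⟫ := by
      rw [inner_sub_right]; ring
    have exp3 : ⟪PA h, PB g⟫ = ⟪PB (PA h), PB g⟫ := by
      rw [inner_sub_left] at z1; linarith
    have exp4 : ⟪PB (PA h), PB g⟫ = ⟪PB (PA h), PA (PB g)⟫ := by
      rw [inner_sub_right] at z2; linarith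
    linarith
  -- the three convergent terms
  have t1 : Tendsto (fun n => ⟪u n - PA (u n), v n⟫) atTop (𝓝 ⟪ub - PA ub, vb⟫) :=
    aux_inner _ v _ vb Mv hstrongA hv hMv
  have t2 : Tendsto (fun n => ⟪PA (u n), v n - PB (v n)⟫) atTop
      (𝓝 ⟪PA ub, vb - PB vb⟫) := by
    have h := aux_inner (fun n => v n - PB (v n)) (fun n => PA (u n))
      (vb - PB vb) (PA ub) Mu hstrongB hPAuw (fun n => (hPA_norm _).trans (hMu n))
    rw [real_inner_comm (vb - PB vb) (PA ub)]
    exact h.congr (fun n => real_inner_comm _ _)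
  have t3 : Tendsto (fun n => ⟪PB (PA (u n)), PA (PB (v n))⟫) atTop
      (𝓝 ⟪PB (PA ub), PA (PB vb)⟫) := by
    apply aux_inner _ _ _ _ Mv hstrongR hsw
    intro n
    exact (hPA_norm _).trans ((hPB_norm _).trans (hMv n))
  have hsum := (t1.add t2).add t3
  rw [ident ub vb]
  exact hsum.congr (fun n => (ident (u n) (v n)).symm)
end

section
/- On the open cube Ω = (0,1)³ ⊂ ℝ³, define vector fields uᵐ(x) = (√m · Σ_{j=1}^{m} χ_{[j/m, j/m + 1/m²]}(x₁), 0, 0) for integers m ≥ 1. Then uᵐ ⇀ 0 weakly in L²(Ω; ℝ³) as m → ∞, but ∫_Ω |uᵐ(x)|² dx → 1 as m → ∞. In particular, ⟨uᵐ, uᵐ⟩_{L²} does not converge to ⟨0, 0⟩ = 0. -/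
open Filter MeasureTheory
open scoped RealInnerProductSpace Topology

/-- The one-dimensional profile `√m · Σ_{j=1}^m χ_{[j/m, j/m + 1/m²]}` of the
"Fakir's carpet" vector fields. -/
noncomputable def fakirProfile (m : ℕ) (t : ℝ) : ℝ :=
  Real.sqrt m * ∑ j ∈ Finset.Icc 1 m,
    Set.indicator (Set.Icc ((j : ℝ) / m) ((j : ℝ) / m + 1 / (m : ℝ) ^ 2)) (fun _ => (1 : ℝ)) t

/-- The open unit cube `Ω = (0,1)³ ⊆ ℝ³`. -/
def unitCube : Set (EuclideanSpace ℝ (Fin 3)) := {x | ∀ i, x i ∈ Set.Ioo (0 : ℝ) 1}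

/-- The "Fakir's carpet" vector fields `uᵐ(x) = (√m Σ_j χ_{[j/m, j/m+1/m²]}(x₁), 0, 0)`. -/
noncomputable def fakirField (m : ℕ) (x : EuclideanSpace ℝ (Fin 3)) :
    EuclideanSpace ℝ (Fin 3) :=
  EuclideanSpace.single (0 : Fin 3) (fakirProfile m (x 0))

namespace FakirAux

/-- The union of the supporting intervals. -/
def fUnion (m : ℕ) : Set ℝ :=
  ⋃ j ∈ Finset.Icc 1 m, Set.Icc ((j:ℝ)/m) ((j:ℝ)/m + 1/(m:ℝ)^2)

lemma measurable_eval (i : Fin 3) : Measurable fun x : EuclideanSpace ℝ (Fin 3) => x i :=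
  (measurable_pi_apply i).comp (MeasurableEquiv.toLp 2 (Fin 3 → ℝ)).symm.measurable

lemma measurableSet_unitCube : MeasurableSet unitCube := by
  have : unitCube = ⋂ i, (fun x : EuclideanSpace ℝ (Fin 3) => x i) ⁻¹' Set.Ioo (0:ℝ) 1 := by
    ext x; simp [unitCube]
  rw [this]
  exact MeasurableSet.iInter fun i => measurable_eval i measurableSet_Ioo

lemma preimage_unitCube :
    (MeasurableEquiv.toLp 2 (Fin 3 → ℝ)).symm.symm ⁻¹' unitCube
      = Set.pi Set.univ (fun _ => Set.Ioo (0:ℝ) 1) := by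
  ext y; simp [unitCube, Set.mem_pi, MeasurableEquiv.toLp_apply]

lemma volume_unitCube : volume unitCube = 1 := by
  have h := ((EuclideanSpace.volume_preserving_symm_measurableEquiv_toLp (Fin 3)).symm).measure_preimage
    (s := unitCube) measurableSet_unitCube.nullMeasurableSet
  rw [← h, preimage_unitCube]
  rw [show (volume : Measure (Fin 3 → ℝ)) (Set.pi Set.univ (fun _ => Set.Ioo (0:ℝ) 1))
      = ∏ _i : Fin 3, volume (Set.Ioo (0:ℝ) 1) from Measure.pi_pi _ _]
  simp [Real.volume_Ioo]

lemma pi_integral (h : ℝ → ℝ) :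
    ∫ y in Set.pi Set.univ (fun _ => Set.Ioo (0:ℝ) 1), h (y 0) ∂(volume : Measure (Fin 3 → ℝ))
      = ∫ t in Set.Ioo (0:ℝ) 1, h t := by
  classical
  set F : Fin 3 → ℝ → ℝ := fun i =>
    if i = 0 then (Set.Ioo (0:ℝ) 1).indicator h else (Set.Ioo (0:ℝ) 1).indicator (fun _ => 1)
    with hF
  rw [← integral_indicator (MeasurableSet.univ_pi (fun _ => measurableSet_Ioo))]
  have hpt : ∀ y : Fin 3 → ℝ,
      (Set.pi Set.univ (fun _ => Set.Ioo (0:ℝ) 1)).indicator (fun y => h (y 0)) y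
        = ∏ i, F i (y i) := by
    intro y
    by_cases hy : y ∈ Set.pi Set.univ (fun _ => Set.Ioo (0:ℝ) 1)
    · rw [Set.indicator_of_mem hy]
      have hy' : ∀ i, y i ∈ Set.Ioo (0:ℝ) 1 := fun i => hy i (Set.mem_univ i)
      rw [Fin.prod_univ_three, hF]
      simp only [if_pos rfl, if_neg (by decide : (1:Fin 3) ≠ 0),
        if_neg (by decide : (2:Fin 3) ≠ 0), if_true]
      rw [Set.indicator_of_mem (hy' 0), Set.indicator_of_mem (hy' 1),
        Set.indicator_of_mem (hy' 2)]
      ring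
    · rw [Set.indicator_of_notMem hy]
      simp only [Set.mem_pi, Set.mem_univ, forall_true_left, not_forall] at hy
      obtain ⟨i, hi⟩ := hy
      refine (Finset.prod_eq_zero (Finset.mem_univ i) ?_).symm
      rw [hF]
      dsimp only
      split_ifs <;> exact Set.indicator_of_notMem hi _
  rw [integral_congr_ae (Filter.Eventually.of_forall hpt)]
  rw [MeasureTheory.volume_pi, MeasureTheory.integral_fintype_prod_eq_prod (ι := Fin 3) F]
  rw [Fin.prod_univ_three, hF]
  simp only [if_pos rfl, if_neg (by decide : (1:Fin 3) ≠ 0),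
    if_neg (by decide : (2:Fin 3) ≠ 0), if_true]
  rw [integral_indicator measurableSet_Ioo, integral_indicator measurableSet_Ioo]
  simp [Real.volume_Ioo]

lemma integral_unitCube (h : ℝ → ℝ) :
    ∫ x in unitCube, h (x 0) = ∫ t in Set.Ioo (0:ℝ) 1, h t := by
  have hp := ((EuclideanSpace.volume_preserving_symm_measurableEquiv_toLp (Fin 3)).symm).setIntegral_preimage_emb
      (MeasurableEquiv.measurableEmbedding _) (fun x => h (x 0)) unitCube
  rw [← hp, preimage_unitCube, ← pi_integral h]
  apply setIntegral_congr_fun (MeasurableSet.univ_pi (fun _ => measurableSet_Ioo))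
  intro y _
  simp [MeasurableEquiv.toLp_apply]

lemma disj_aux {m j k : ℕ} (hm : 2 ≤ m) (hjk : j < k) {t : ℝ}
    (h1 : t ∈ Set.Icc ((j:ℝ)/m) ((j:ℝ)/m + 1/(m:ℝ)^2))
    (h2 : t ∈ Set.Icc ((k:ℝ)/m) ((k:ℝ)/m + 1/(m:ℝ)^2)) : False := by
  have hm' : (2:ℝ) ≤ m := by exact_mod_cast hm
  have hm0 : (0:ℝ) < m := by linarith
  have hk : (j:ℝ) + 1 ≤ k := by exact_mod_cast hjk
  have key : (j:ℝ)/m + 1/m^2 < (k:ℝ)/m := by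
    have h1m : 1/(m:ℝ)^2 < 1/m := by
      apply div_lt_div_of_pos_left one_pos hm0
      nlinarith
    have h2m : ((j:ℝ)+1)/m ≤ (k:ℝ)/m := (div_le_div_iff_of_pos_right hm0).2 hk
    rw [add_div] at h2m
    linarith
  have := h1.2
  have := h2.1
  linarith

lemma sum_indicator_sq {m : ℕ} (hm : 2 ≤ m) (t : ℝ) :
    (∑ j ∈ Finset.Icc 1 m,
      (Set.Icc ((j:ℝ)/m) ((j:ℝ)/m + 1/(m:ℝ)^2)).indicator (fun _ => (1:ℝ)) t) ^ 2
      = ∑ j ∈ Finset.Icc 1 m,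
      (Set.Icc ((j:ℝ)/m) ((j:ℝ)/m + 1/(m:ℝ)^2)).indicator (fun _ => (1:ℝ)) t := by
  by_cases hex : ∃ j ∈ Finset.Icc 1 m, t ∈ Set.Icc ((j:ℝ)/m) ((j:ℝ)/m + 1/(m:ℝ)^2)
  · obtain ⟨j₀, hj₀, ht⟩ := hex
    have hsum : (∑ j ∈ Finset.Icc 1 m,
        (Set.Icc ((j:ℝ)/m) ((j:ℝ)/m + 1/(m:ℝ)^2)).indicator (fun _ => (1:ℝ)) t) = 1 := by
      rw [Finset.sum_eq_single_of_mem j₀ hj₀]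
      · exact Set.indicator_of_mem ht _
      · intro k _ hne
        apply Set.indicator_of_notMem
        intro htk
        rcases lt_or_gt_of_ne hne with h | h
        · exact disj_aux hm h htk ht
        · exact disj_aux hm h ht htk
    rw [hsum]; norm_num
  · push_neg at hex
    rw [Finset.sum_eq_zero fun k hk => Set.indicator_of_notMem (hex k hk) _]
    norm_num

lemma integral_sq_profile {m : ℕ} (hm : 2 ≤ m) :
    ∫ t in Set.Ioo (0:ℝ) 1, fakirProfile m t ^ 2 = 1 - 1/(m:ℝ) := by
  haveI : Fact (volume (Set.Ioo (0:ℝ) 1) < ⊤) := ⟨by simp [Real.volume_Ioo]⟩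
  have hm' : (2:ℝ) ≤ m := by exact_mod_cast hm
  have hm0 : (0:ℝ) < m := by linarith
  have hpt : ∀ t : ℝ, fakirProfile m t ^ 2 = (m:ℝ) * ∑ j ∈ Finset.Icc 1 m,
      (Set.Icc ((j:ℝ)/m) ((j:ℝ)/m + 1/(m:ℝ)^2)).indicator (fun _ => (1:ℝ)) t := by
    intro t
    rw [fakirProfile, mul_pow, Real.sq_sqrt (by positivity), sum_indicator_sq hm t]
  simp_rw [hpt]
  rw [integral_const_mul, integral_finset_sum _ (fun j _ =>
    ((integrable_const (1:ℝ)).indicator measurableSet_Icc))]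
  have hval : ∀ j ∈ Finset.Icc 1 m,
      (∫ t in Set.Ioo (0:ℝ) 1,
        (Set.Icc ((j:ℝ)/m) ((j:ℝ)/m + 1/(m:ℝ)^2)).indicator (fun _ => (1:ℝ)) t)
        = if j = m then 0 else 1/(m:ℝ)^2 := by
    intro j hj
    rw [Finset.mem_Icc] at hj
    rw [setIntegral_indicator measurableSet_Icc]
    by_cases hjm : j = m
    · subst hjm
      have : Set.Ioo (0:ℝ) 1 ∩ Set.Icc ((j:ℝ)/j) ((j:ℝ)/j + 1/(j:ℝ)^2) = ∅ := by
        apply Set.eq_empty_of_forall_notMem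
        rintro t ⟨ht1, ht2⟩
        have hj1 : (j:ℝ)/j = 1 := div_self (by positivity)
        rw [hj1] at ht2
        exact absurd ht2.1 (not_le.2 ht1.2)
      rw [this, if_pos rfl]
      simp
    · rw [if_neg hjm]
      have hjlt : (j:ℝ) ≤ m - 1 := by
        have : j + 1 ≤ m := Nat.succ_le_of_lt (lt_of_le_of_ne hj.2 hjm)
        have := (Nat.cast_le (α := ℝ)).2 this
        push_cast at this
        linarith
      have hj1 : (1:ℝ) ≤ j := by exact_mod_cast hj.1
      have hsub : Set.Icc ((j:ℝ)/m) ((j:ℝ)/m + 1/(m:ℝ)^2) ⊆ Set.Ioo (0:ℝ) 1 := by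
        apply Set.Icc_subset_Ioo
        · positivity
        · rw [div_add_div _ _ (ne_of_gt hm0) (ne_of_gt (pow_pos hm0 2)),
            div_lt_one (by positivity)]
          ring_nf
          nlinarith
      rw [Set.inter_eq_self_of_subset_right hsub]
      simp [Real.volume_Icc]
  rw [Finset.sum_congr rfl hval]
  have : ∑ j ∈ Finset.Icc 1 m, (if j = m then (0:ℝ) else 1/(m:ℝ)^2)
      = ∑ j ∈ Finset.Icc 1 m, (1/(m:ℝ)^2)
        - ∑ j ∈ Finset.Icc 1 m, (if j = m then 1/(m:ℝ)^2 else 0) := by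
    rw [← Finset.sum_sub_distrib]
    apply Finset.sum_congr rfl
    intro j _
    by_cases hjm : j = m <;> simp [hjm]
  rw [this, Finset.sum_ite_eq' (Finset.Icc 1 m) m, if_pos (by simp [Finset.mem_Icc]; omega),
    Finset.sum_const, Nat.card_Icc]
  simp only [nsmul_eq_mul]
  push_cast
  field_simp

lemma fakirProfile_nonneg (m : ℕ) (t : ℝ) : 0 ≤ fakirProfile m t :=
  mul_nonneg (Real.sqrt_nonneg _)
    (Finset.sum_nonneg fun j _ => Set.indicator_nonneg (fun _ _ => zero_le_one) t)

lemma fakirProfile_eq_zero {m : ℕ} {t : ℝ} (ht : t ∉ fUnion m) : fakirProfile m t = 0 := by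
  rw [fakirProfile, Finset.sum_eq_zero, mul_zero]
  intro j hj
  apply Set.indicator_of_notMem
  intro hmem
  exact ht (Set.mem_biUnion hj hmem)

lemma fakirProfile_measurable (m : ℕ) : Measurable (fakirProfile m) := by
  apply Measurable.const_mul
  exact Finset.measurable_sum _ fun j _ => measurable_const.indicator measurableSet_Icc

lemma fakirProfile_le (m : ℕ) (t : ℝ) : fakirProfile m t ≤ Real.sqrt m * m := by
  apply mul_le_mul_of_nonneg_left _ (Real.sqrt_nonneg _)
  calc (∑ j ∈ Finset.Icc 1 m,
      (Set.Icc ((j:ℝ)/m) ((j:ℝ)/m + 1/(m:ℝ)^2)).indicator (fun _ => (1:ℝ)) t)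
      ≤ ∑ _j ∈ Finset.Icc 1 m, (1:ℝ) := by
        apply Finset.sum_le_sum
        intro j _
        exact Set.indicator_apply_le' (fun _ => le_rfl) (fun _ => zero_le_one)
    _ = m := by rw [Finset.sum_const, Nat.card_Icc]; simp

lemma measurableSet_fUnion (m : ℕ) : MeasurableSet (fUnion m) :=
  Set.Finite.measurableSet_biUnion (Finset.finite_toSet _) fun _ _ => measurableSet_Icc

lemma volume_fUnion_le (m : ℕ) (hm : 1 ≤ m) :
    volume (fUnion m) ≤ ENNReal.ofReal (1/(m:ℝ)) := by
  have hm0 : (0:ℝ) < m := by exact_mod_cast hm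
  calc volume (fUnion m)
      ≤ ∑ j ∈ Finset.Icc 1 m, volume (Set.Icc ((j:ℝ)/m) ((j:ℝ)/m + 1/(m:ℝ)^2)) :=
        measure_biUnion_finset_le _ _
    _ = ∑ _j ∈ Finset.Icc 1 m, ENNReal.ofReal (1/(m:ℝ)^2) := by
        apply Finset.sum_congr rfl
        intro j _
        rw [Real.volume_Icc]
        congr 1
        ring
    _ = ENNReal.ofReal (1/(m:ℝ)) := by
        rw [Finset.sum_const, Nat.card_Icc, nsmul_eq_mul]
        simp only [Nat.add_sub_cancel]
        rw [← ENNReal.ofReal_natCast m, ← ENNReal.ofReal_mul (by positivity)]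
        congr 1
        field_simp

/-- The slab of points of the cube whose first coordinate lies in `fUnion m`. -/
def slab (m : ℕ) : Set (EuclideanSpace ℝ (Fin 3)) := {x | x 0 ∈ fUnion m}

lemma preimage_slab (m : ℕ) :
    (MeasurableEquiv.toLp 2 (Fin 3 → ℝ)).symm.symm ⁻¹' (slab m ∩ unitCube)
      = Set.pi Set.univ
          (fun i => if i = 0 then Set.Ioo (0:ℝ) 1 ∩ fUnion m else Set.Ioo (0:ℝ) 1) := by
  classical
  ext y
  simp only [slab, Set.mem_preimage, Set.mem_inter_iff, Set.mem_setOf_eq, Set.mem_pi,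
    Set.mem_univ, forall_true_left, unitCube, MeasurableEquiv.toLp_apply,
    PiLp.toLp_apply]
  constructor
  · rintro ⟨h1, h2⟩ i
    by_cases hi : i = 0
    · subst hi
      rw [if_pos rfl]
      exact ⟨h2 0, h1⟩
    · rw [if_neg hi]
      exact h2 i
  · intro h
    have h0 := h 0
    rw [if_pos rfl] at h0
    refine ⟨h0.2, fun i => ?_⟩
    by_cases hi : i = 0
    · subst hi; exact h0.1
    · have := h i
      rwa [if_neg hi] at this

lemma measurableSet_slab (m : ℕ) : MeasurableSet (slab m) :=
  measurable_eval 0 (measurableSet_fUnion m)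

lemma volume_slab_le (m : ℕ) (hm : 1 ≤ m) :
    volume (slab m ∩ unitCube) ≤ ENNReal.ofReal (1/(m:ℝ)) := by
  classical
  have hmeas : MeasurableSet (slab m ∩ unitCube) :=
    ((measurable_eval 0) (measurableSet_fUnion m)).inter measurableSet_unitCube
  rw [← ((EuclideanSpace.volume_preserving_symm_measurableEquiv_toLp (Fin 3)).symm).measure_preimage
    hmeas.nullMeasurableSet, preimage_slab]
  rw [show (volume : Measure (Fin 3 → ℝ)) (Set.pi Set.univ
        (fun i => if i = 0 then Set.Ioo (0:ℝ) 1 ∩ fUnion m else Set.Ioo (0:ℝ) 1))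
      = ∏ i : Fin 3, volume (if i = 0 then Set.Ioo (0:ℝ) 1 ∩ fUnion m else Set.Ioo (0:ℝ) 1)
    from Measure.pi_pi _ _]
  rw [Fin.prod_univ_three]
  simp only [if_pos rfl, if_neg (by decide : (1:Fin 3) ≠ 0),
    if_neg (by decide : (2:Fin 3) ≠ 0), if_true]
  rw [Real.volume_Ioo]
  simp only [sub_zero, ENNReal.ofReal_one, mul_one]
  calc volume (Set.Ioo (0:ℝ) 1 ∩ fUnion m) ≤ volume (fUnion m) :=
        measure_mono Set.inter_subset_right
    _ ≤ ENNReal.ofReal (1/(m:ℝ)) := volume_fUnion_le m hm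

end FakirAux

set_option maxHeartbeats 1000000 in
/-- On `Ω = (0,1)³`, the Fakir's carpet fields `uᵐ` converge weakly to `0`
in `L²(Ω; ℝ³)` as `m → ∞`, yet `∫_Ω |uᵐ|² dx → 1`; in particular `⟨uᵐ, uᵐ⟩_{L²}` does not
converge to `⟨0, 0⟩ = 0`. -/
theorem stmt_11 :
    (∀ g : EuclideanSpace ℝ (Fin 3) → EuclideanSpace ℝ (Fin 3),
        MemLp g 2 (volume.restrict unitCube) →
        Tendsto (fun m : ℕ => ∫ x in unitCube, ⟪fakirField m x, g x⟫) atTop (𝓝 0))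
      ∧ Tendsto (fun m : ℕ => ∫ x in unitCube, ‖fakirField m x‖ ^ 2) atTop (𝓝 1)
      ∧ ¬ Tendsto (fun m : ℕ => ∫ x in unitCube, ⟪fakirField m x, fakirField m x⟫)
          atTop (𝓝 0) := by
  classical
  have hvol : volume unitCube = 1 := FakirAux.volume_unitCube
  haveI : IsFiniteMeasure (volume.restrict unitCube) :=
    ⟨by rw [Measure.restrict_apply_univ, hvol]; exact ENNReal.one_lt_top⟩
  have key2 : ∀ m : ℕ, 2 ≤ m → ∫ x in unitCube, ‖fakirField m x‖ ^ 2 = 1 - 1/(m:ℝ) := by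
    intro m hm
    have h1 : ∫ x in unitCube, ‖fakirField m x‖ ^ 2
        = ∫ x in unitCube, (fun t => fakirProfile m t ^ 2) (x 0) := by
      apply integral_congr_ae (Filter.Eventually.of_forall ?_)
      intro x
      simp [fakirField, EuclideanSpace.norm_single, Real.norm_eq_abs, sq_abs]
    exact h1.trans ((FakirAux.integral_unitCube (fun t => fakirProfile m t ^ 2)).trans
      (FakirAux.integral_sq_profile hm))
  have part2 : Tendsto (fun m : ℕ => ∫ x in unitCube, ‖fakirField m x‖ ^ 2) atTop (𝓝 1) := by
    have hlim : Tendsto (fun m : ℕ => 1 - 1/(m:ℝ)) atTop (𝓝 1) := by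
      have h0 := tendsto_one_div_atTop_nhds_zero_nat (𝕜 := ℝ)
      have := (tendsto_const_nhds (x := (1:ℝ)) (f := (atTop : Filter ℕ))).sub h0
      simpa using this
    apply hlim.congr'
    filter_upwards [eventually_ge_atTop 2] with m hm
    exact (key2 m hm).symm
  refine ⟨?_, part2, ?_⟩
  · intro g hg
    have hGcont : Continuous fun v : EuclideanSpace ℝ (Fin 3) => v 0 :=
      (EuclideanSpace.proj (𝕜 := ℝ) (0 : Fin 3)).continuous
    have hGaesm : AEStronglyMeasurable (fun x => g x 0) (volume.restrict unitCube) :=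
      hGcont.comp_aestronglyMeasurable hg.aestronglyMeasurable
    have habs : ∀ v : EuclideanSpace ℝ (Fin 3), ‖v 0‖ ≤ ‖v‖ := by
      intro v
      rw [EuclideanSpace.norm_eq, Real.norm_eq_abs, ← Real.sqrt_sq_eq_abs]
      apply Real.sqrt_le_sqrt
      have := Finset.single_le_sum (f := fun i => ‖v i‖ ^ 2) (fun i _ => by positivity)
        (Finset.mem_univ (0 : Fin 3))
      simpa [Real.norm_eq_abs, sq_abs] using this
    have hG2 : MemLp (fun x => g x 0) 2 (volume.restrict unitCube) :=
      hg.of_le hGaesm (Filter.Eventually.of_forall fun x => habs (g x))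
    have hGint : Integrable (fun x => g x 0 ^ 2) (volume.restrict unitCube) := hG2.integrable_sq
    have hμS : Tendsto (fun m => (volume.restrict unitCube) (FakirAux.slab m)) atTop (𝓝 0) := by
      have hub : ∀ᶠ m : ℕ in atTop,
          (volume.restrict unitCube) (FakirAux.slab m) ≤ ENNReal.ofReal (1/(m:ℝ)) := by
        filter_upwards [eventually_ge_atTop 1] with m hm
        rw [Measure.restrict_apply (FakirAux.measurableSet_slab m)]
        exact FakirAux.volume_slab_le m hm
      have hto : Tendsto (fun m : ℕ => ENNReal.ofReal (1/(m:ℝ))) atTop (𝓝 0) := by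
        rw [← ENNReal.ofReal_zero]
        exact ENNReal.tendsto_ofReal tendsto_one_div_atTop_nhds_zero_nat
      exact tendsto_of_tendsto_of_tendsto_of_le_of_le' tendsto_const_nhds hto
        (Filter.Eventually.of_forall fun _ => zero_le) hub
    have hr : Tendsto (fun m => ∫ x in FakirAux.slab m, g x 0 ^ 2 ∂(volume.restrict unitCube))
        atTop (𝓝 0) := hGint.tendsto_setIntegral_nhds_zero hμS
    rw [NormedAddCommGroup.tendsto_nhds_zero]
    intro ε hε
    filter_upwards [hr.eventually (gt_mem_nhds (show (0:ℝ) < ε ^ 2 by positivity)),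
      eventually_ge_atTop 2] with m hrm hm2
    have hrw : (∫ x in unitCube, ⟪fakirField m x, g x⟫)
        = ∫ x in unitCube, fakirProfile m (x 0) * g x 0 := by
      apply integral_congr_ae (Filter.Eventually.of_forall ?_)
      intro x
      simp [fakirField, EuclideanSpace.inner_single_left]
    rw [hrw]
    have int1 : Integrable (fun x => fakirProfile m (x 0) ^ 2) (volume.restrict unitCube) := by
      apply (integrable_const ((Real.sqrt m * m) ^ 2)).mono'
      · exact (((FakirAux.fakirProfile_measurable m).comp
          (FakirAux.measurable_eval 0)).pow_const 2).aestronglyMeasurable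
      · apply Filter.Eventually.of_forall
        intro x
        rw [Real.norm_eq_abs, abs_of_nonneg (sq_nonneg _)]
        exact pow_le_pow_left₀ (FakirAux.fakirProfile_nonneg m _)
          (FakirAux.fakirProfile_le m _) 2
    have int2 : Integrable ((FakirAux.slab m).indicator (fun x => g x 0 ^ 2 / (2 * ε)))
        (volume.restrict unitCube) :=
      (hGint.div_const (2 * ε)).indicator (FakirAux.measurableSet_slab m)
    have hbd : ∀ x, ‖fakirProfile m (x 0) * g x 0‖
        ≤ ε/2 * fakirProfile m (x 0) ^ 2
          + (FakirAux.slab m).indicator (fun x => g x 0 ^ 2 / (2 * ε)) x := by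
      intro x
      rw [Real.norm_eq_abs, abs_mul, abs_of_nonneg (FakirAux.fakirProfile_nonneg m _)]
      by_cases hx : x ∈ FakirAux.slab m
      · rw [Set.indicator_of_mem hx]
        have key : ∀ a b : ℝ, a * b ≤ ε/2 * a^2 + b^2/(2*ε) := by
          intro a b
          have hd : b^2/(2*ε) * (2*ε) = b^2 := div_mul_cancel₀ _ (by positivity)
          nlinarith [sq_nonneg (ε*a - b), hε, sq_nonneg b]
        have := key (fakirProfile m (x 0)) |g x 0|
        rwa [sq_abs] at this
      · rw [Set.indicator_of_notMem hx,
          FakirAux.fakirProfile_eq_zero (show x 0 ∉ FakirAux.fUnion m from hx)]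
        simp
    calc ‖∫ x in unitCube, fakirProfile m (x 0) * g x 0‖
        ≤ ∫ x in unitCube, ‖fakirProfile m (x 0) * g x 0‖ := by
          apply norm_integral_le_integral_norm
      _ ≤ ∫ x in unitCube, (ε/2 * fakirProfile m (x 0) ^ 2
            + (FakirAux.slab m).indicator (fun x => g x 0 ^ 2 / (2 * ε)) x) :=
          by
          apply integral_mono_of_nonneg (Filter.Eventually.of_forall fun x => norm_nonneg _)
            ((int1.const_mul (ε/2)).add int2) (Filter.Eventually.of_forall hbd)
      _ = ε/2 * (∫ x in unitCube, fakirProfile m (x 0) ^ 2)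
            + ∫ x in FakirAux.slab m, g x 0 ^ 2 / (2 * ε) ∂(volume.restrict unitCube) := by
          rw [integral_add (int1.const_mul (ε/2)) int2, integral_const_mul,
            integral_indicator (FakirAux.measurableSet_slab m)]
      _ = ε/2 * (1 - 1/(m:ℝ))
            + (∫ x in FakirAux.slab m, g x 0 ^ 2 ∂(volume.restrict unitCube)) / (2 * ε) := by
          rw [integral_div]
          congr 1
          exact congrArg _ ((FakirAux.integral_unitCube (fun t => fakirProfile m t ^ 2)).trans
            (FakirAux.integral_sq_profile hm2))
      _ < ε := by
          have h1 : ε/2 * (1 - 1/(m:ℝ)) ≤ ε/2 := by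
            have h0 : 0 ≤ 1/(m:ℝ) := by positivity
            nlinarith
          have h2 : (∫ x in FakirAux.slab m, g x 0 ^ 2 ∂(volume.restrict unitCube)) / (2 * ε)
              < ε/2 := by
            rw [div_lt_iff₀ (by positivity)]
            calc (∫ x in FakirAux.slab m, g x 0 ^ 2 ∂(volume.restrict unitCube))
                < ε ^ 2 := hrm
              _ = ε/2 * (2 * ε) := by ring
          linarith
  · intro hcon
    have heq : (fun m : ℕ => ∫ x in unitCube, ⟪fakirField m x, fakirField m x⟫)
        = fun m : ℕ => ∫ x in unitCube, ‖fakirField m x‖ ^ 2 := by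
      funext m
      apply integral_congr_ae (Filter.Eventually.of_forall ?_)
      intro x
      exact real_inner_self_eq_norm_sq _
    rw [heq] at hcon
    exact absurd (tendsto_nhds_unique hcon part2) (by norm_num)
end

section
/- For the vector fields uᵐ of the Fakir's carpet example on Ω = (0,1)³, for every test function ψ ∈ W^{1,∞}₀(Ω) one has |∫_Ω div(uᵐ)(x) ψ(x) dx| = |∫_Ω uᵐ(x)·∇ψ(x) dx| ≤ ‖ψ‖_{W^{1,∞}} / √m, and hence div(uᵐ) → 0 in the sense of distributions. -/
open Filter MeasureTheory
open scoped Topology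

lemma volume_box (s : Fin 3 → Set ℝ) (hs : ∀ i, MeasurableSet (s i)) :
    volume ({x : EuclideanSpace ℝ (Fin 3) | ∀ i, x i ∈ s i}) = ∏ i, volume (s i) := by
  have h := (EuclideanSpace.volume_preserving_symm_measurableEquiv_toLp (Fin 3)).measure_preimage
    (s := Set.univ.pi s) ((MeasurableSet.univ_pi (fun i => hs i)).nullMeasurableSet)
  have heq : ((MeasurableEquiv.toLp 2 (Fin 3 → ℝ)).symm) ⁻¹' (Set.univ.pi s)
      = {x : EuclideanSpace ℝ (Fin 3) | ∀ i, x i ∈ s i} := by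
    ext x; simp [Set.mem_pi]
  rw [heq] at h
  rw [h, volume_pi_pi]

lemma measurableSet_box (s : Fin 3 → Set ℝ) (hs : ∀ i, MeasurableSet (s i)) :
    MeasurableSet ({x : EuclideanSpace ℝ (Fin 3) | ∀ i, x i ∈ s i}) := by
  have heq : ((MeasurableEquiv.toLp 2 (Fin 3 → ℝ)).symm) ⁻¹' (Set.univ.pi s)
      = {x : EuclideanSpace ℝ (Fin 3) | ∀ i, x i ∈ s i} := by
    ext x; simp [Set.mem_pi]
  rw [← heq]
  exact ((MeasurableEquiv.toLp 2 (Fin 3 → ℝ)).symm).measurable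
    (MeasurableSet.univ_pi (fun i => hs i))

lemma measurableSet_unitCube : MeasurableSet unitCube :=
  measurableSet_box (fun _ => Set.Ioo 0 1) (fun _ => measurableSet_Ioo)

lemma volume_unitCube : volume unitCube = 1 := by
  have := volume_box (fun _ => Set.Ioo 0 1) (fun _ => measurableSet_Ioo)
  simpa [unitCube] using this

/-- The slab of the unit cube where the first coordinate lies in `Icc a b`. -/
def slab (a b : ℝ) : Set (EuclideanSpace ℝ (Fin 3)) :=
  {x | ∀ i, x i ∈ (if i = 0 then Set.Ioo (0:ℝ) 1 ∩ Set.Icc a b else Set.Ioo 0 1)}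

lemma measurableSet_slab (a b : ℝ) : MeasurableSet (slab a b) :=
  measurableSet_box _ (fun i => by
    by_cases h : i = 0 <;>
      simp [h, measurableSet_Ioo, (measurableSet_Ioo).inter measurableSet_Icc])

lemma volume_slab_le (a b : ℝ) : volume (slab a b) ≤ ENNReal.ofReal (b - a) := by
  rw [slab, volume_box _ (fun i => by
    by_cases h : i = 0 <;>
      simp [h, measurableSet_Ioo, (measurableSet_Ioo).inter measurableSet_Icc])]
  rw [Fin.prod_univ_three,
    if_pos rfl, if_neg (by decide : (1:Fin 3) ≠ 0), if_neg (by decide : (2:Fin 3) ≠ 0),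
    Real.volume_Ioo]
  norm_num
  calc volume (Set.Ioo (0:ℝ) 1 ∩ Set.Icc a b) ≤ volume (Set.Icc a b) :=
        measure_mono Set.inter_subset_right
    _ = ENNReal.ofReal (b - a) := Real.volume_Icc

lemma slab_mem_cube {a b : ℝ} {x : EuclideanSpace ℝ (Fin 3)} (hx : x ∈ slab a b) :
    x ∈ unitCube := by
  intro i
  rcases eq_or_ne i 0 with hi | hi
  · subst hi
    have h0 := hx 0
    rw [if_pos rfl] at h0
    exact h0.1
  · have h := hx i
    rw [if_neg hi] at h
    exact h

/-- For the Fakir's carpet fields `uᵐ` on `Ω = (0,1)³` and any test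
function `ψ ∈ W^{1,∞}₀(Ω)` (Lipschitz-differentiable, supported in `Ω`, with
`|ψ| ≤ K` and `‖∇ψ‖ ≤ K`), the distributional pairing of `div uᵐ` with `ψ`, which equals
`−∫_Ω uᵐ·∇ψ = −∫_Ω (fakirProfile m x₁) ∂₁ψ(x) dx`, satisfies
`|∫_Ω uᵐ·∇ψ| ≤ K/√m` for all `m ≥ 1`; hence `div uᵐ → 0` in the sense of distributions. -/
theorem stmt_12
    (ψ : EuclideanSpace ℝ (Fin 3) → ℝ)
    (hψdiff : Differentiable ℝ ψ)
    (hψsupp : tsupport ψ ⊆ unitCube)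
    (K : ℝ)
    (hK0 : ∀ x, |ψ x| ≤ K)
    (hK1 : ∀ x, ‖fderiv ℝ ψ x‖ ≤ K) :
    (∀ m : ℕ, 1 ≤ m →
        |∫ x in unitCube, fakirProfile m (x 0) *
            fderiv ℝ ψ x (EuclideanSpace.single (0 : Fin 3) (1 : ℝ))|
          ≤ K / Real.sqrt m)
      ∧ Tendsto (fun m : ℕ => ∫ x in unitCube, fakirProfile m (x 0) *
            fderiv ℝ ψ x (EuclideanSpace.single (0 : Fin 3) (1 : ℝ)))
          atTop (𝓝 0) := by
  have hK : 0 ≤ K := le_trans (abs_nonneg _) (hK0 0)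
  set v : EuclideanSpace ℝ (Fin 3) := EuclideanSpace.single (0 : Fin 3) (1 : ℝ) with hv
  set D : EuclideanSpace ℝ (Fin 3) → ℝ := fun x => fderiv ℝ ψ x v with hD
  have hDmeas : Measurable D := measurable_fderiv_apply_const ℝ ψ v
  have hvnorm : ‖v‖ = 1 := by
    rw [hv, EuclideanSpace.norm_single]; norm_num
  have hDbound : ∀ x, |D x| ≤ K := by
    intro x
    calc |D x| = ‖fderiv ℝ ψ x v‖ := rfl
      _ ≤ ‖fderiv ℝ ψ x‖ * ‖v‖ := (fderiv ℝ ψ x).le_opNorm v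
      _ ≤ K := by rw [hvnorm, mul_one]; exact hK1 x
  -- projection onto first coordinate is measurable
  have hproj : Measurable (fun x : EuclideanSpace ℝ (Fin 3) => x 0) :=
    (measurable_pi_apply 0).comp ((MeasurableEquiv.toLp 2 (Fin 3 → ℝ)).symm).measurable
  have key : ∀ m : ℕ, 1 ≤ m →
      |∫ x in unitCube, fakirProfile m (x 0) * D x| ≤ K / Real.sqrt m := by
    intro m hm
    have hm0 : (0:ℝ) < m := by exact_mod_cast hm
    have hsm : (0:ℝ) < Real.sqrt m := Real.sqrt_pos.mpr hm0
    set I : ℕ → Set ℝ := fun j => Set.Icc ((j : ℝ) / m) ((j : ℝ) / m + 1 / (m : ℝ) ^ 2)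
      with hI
    set G : ℕ → EuclideanSpace ℝ (Fin 3) → ℝ := fun j x =>
      Real.sqrt m * (I j).indicator (fun _ => (1:ℝ)) (x 0) * D x with hG
    have h_eq : ∀ x, fakirProfile m (x 0) * D x = ∑ j ∈ Finset.Icc 1 m, G j x := by
      intro x
      rw [fakirProfile, Finset.mul_sum, Finset.sum_mul]
    have hGmeas : ∀ j, Measurable (G j) := by
      intro j
      exact (measurable_const.mul
        ((measurable_const.indicator measurableSet_Icc).comp hproj)).mul hDmeas
    -- the dominating function for G j
    have hdom : ∀ j, ∀ x ∈ unitCube,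
        ‖G j x‖ ≤ (slab ((j:ℝ)/m) ((j:ℝ)/m + 1/(m:ℝ)^2)).indicator
          (fun _ => Real.sqrt m * K) x := by
      intro j x hx
      by_cases hmem : x 0 ∈ I j
      · have hx' : x ∈ slab ((j:ℝ)/m) ((j:ℝ)/m + 1/(m:ℝ)^2) := by
          intro i
          by_cases h : i = 0
          · subst h; simp only [if_pos rfl]; exact ⟨hx 0, hmem⟩
          · simp only [if_neg h]; exact hx i
        rw [Set.indicator_of_mem hx']
        rw [hG]
        simp only [Set.indicator_of_mem hmem]
        rw [Real.norm_eq_abs, abs_mul, mul_one, abs_of_nonneg hsm.le]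
        exact mul_le_mul_of_nonneg_left (hDbound x) hsm.le
      · rw [hG]
        simp only [Set.indicator_of_notMem hmem, mul_zero, zero_mul, norm_zero]
        exact Set.indicator_nonneg (fun _ _ => by positivity) x
    have hGint : ∀ j, IntegrableOn (G j) unitCube := by
      intro j
      apply Measure.integrableOn_of_bounded (M := Real.sqrt m * K)
      · rw [volume_unitCube]; exact ENNReal.one_ne_top
      · exact (hGmeas j).aestronglyMeasurable
      · filter_upwards with x
        rw [hG, Real.norm_eq_abs, abs_mul, abs_mul, abs_of_nonneg hsm.le]
        have h1 : |(I j).indicator (fun _ => (1:ℝ)) (x 0)| ≤ 1 := by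
          by_cases hmem : x 0 ∈ I j <;> simp [hmem]
        calc Real.sqrt m * |(I j).indicator (fun _ => (1:ℝ)) (x 0)| * |D x|
            ≤ Real.sqrt m * 1 * K := by
              apply mul_le_mul (mul_le_mul_of_nonneg_left h1 hsm.le) (hDbound x)
                (abs_nonneg _) (by positivity)
          _ = Real.sqrt m * K := by ring
    -- bound each term
    have hterm : ∀ j, |∫ x in unitCube, G j x| ≤ Real.sqrt m * K * (1/(m:ℝ)^2) := by
      intro j
      set s := slab ((j:ℝ)/m) ((j:ℝ)/m + 1/(m:ℝ)^2) with hs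
      have hsmeas := measurableSet_slab ((j:ℝ)/m) ((j:ℝ)/m + 1/(m:ℝ)^2)
      have hsvol : volume s ≤ ENNReal.ofReal (1/(m:ℝ)^2) := by
        calc volume s ≤ ENNReal.ofReal (((j:ℝ)/m + 1/(m:ℝ)^2) - (j:ℝ)/m) :=
              volume_slab_le _ _
          _ = ENNReal.ofReal (1/(m:ℝ)^2) := by congr 1; ring
      haveI : IsFiniteMeasure (volume.restrict unitCube) := by
        constructor
        rw [Measure.restrict_apply_univ, volume_unitCube]
        exact ENNReal.one_lt_top
      have hgint : Integrable (s.indicator (fun _ => Real.sqrt m * K))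
          (volume.restrict unitCube) := by
        apply Integrable.indicator _ hsmeas
        exact integrable_const _
      have h1 : ‖∫ x in unitCube, G j x‖ ≤
          ∫ x in unitCube, s.indicator (fun _ => Real.sqrt m * K) x := by
        apply norm_integral_le_of_norm_le hgint
        rw [ae_restrict_iff' measurableSet_unitCube]
        filter_upwards with x hx
        exact hdom j x hx
      rw [Real.norm_eq_abs] at h1
      refine h1.trans ?_
      rw [integral_indicator hsmeas, setIntegral_const, measureReal_restrict_apply hsmeas]
      have hsub : s ∩ unitCube = s :=
        Set.inter_eq_left.mpr (fun x hx => slab_mem_cube hx)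
      rw [← hs, hsub]
      have htr : (volume s).toReal ≤ 1/(m:ℝ)^2 := by
        have := ENNReal.toReal_mono (by simp) hsvol
        rwa [ENNReal.toReal_ofReal (by positivity)] at this
      calc (volume s).toReal • (Real.sqrt m * K) = (volume s).toReal * (Real.sqrt m * K) := by
            rw [smul_eq_mul]
        _ ≤ (1/(m:ℝ)^2) * (Real.sqrt m * K) := by
            apply mul_le_mul_of_nonneg_right htr (by positivity)
        _ = Real.sqrt m * K * (1/(m:ℝ)^2) := by ring
    -- assemble
    have hsplit : ∫ x in unitCube, fakirProfile m (x 0) * D x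
        = ∑ j ∈ Finset.Icc 1 m, ∫ x in unitCube, G j x := by
      rw [← integral_finset_sum _ (fun j _ => hGint j)]
      exact setIntegral_congr_fun measurableSet_unitCube (fun x _ => h_eq x)
    rw [hsplit]
    calc |∑ j ∈ Finset.Icc 1 m, ∫ x in unitCube, G j x|
        ≤ ∑ j ∈ Finset.Icc 1 m, |∫ x in unitCube, G j x| := Finset.abs_sum_le_sum_abs _ _
      _ ≤ ∑ j ∈ Finset.Icc 1 m, Real.sqrt m * K * (1/(m:ℝ)^2) :=
          Finset.sum_le_sum (fun j _ => hterm j)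
      _ = m * (Real.sqrt m * K * (1/(m:ℝ)^2)) := by
          rw [Finset.sum_const, Nat.card_Icc]
          simp [nsmul_eq_mul]
      _ = K / Real.sqrt m := by
          have hss : Real.sqrt m * Real.sqrt m = m := Real.mul_self_sqrt hm0.le
          rw [eq_div_iff hsm.ne']
          field_simp
          linear_combination K * hss
  constructor
  · exact key
  · apply squeeze_zero_norm' (a := fun m : ℕ => K / Real.sqrt m)
    · filter_upwards [eventually_ge_atTop 1] with m hm
      exact key m hm
    · have hsqrt : Tendsto (fun m : ℕ => Real.sqrt m) atTop atTop := by
        have h1 : Tendsto (fun x : ℝ => x ^ (1/2 : ℝ)) atTop atTop :=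
          tendsto_rpow_atTop (by norm_num)
        have := h1.comp tendsto_natCast_atTop_atTop (α := ℕ)
        refine this.congr (fun m => ?_)
        simp [Function.comp, Real.sqrt_eq_rpow]
      exact Tendsto.div_atTop tendsto_const_nhds hsqrt
end
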